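/- arXiv:0707.2329 — 9 statements merged into one kernel-verified Lean document; each statement's English description precedes it below -/
import Mathlib

section
/- Let L : c₀(I) → c₀(J) be a linear isometry, k ∈ I, and j ∈ J with |L(e^k)(j)| = 1. Then for every v ∈ c₀(I) with v(k) = 0, one has L(v)(j) = 0. -/
open scoped ZeroAtInfty

/-- The canonical basis vector `e^k` of `c₀(I)`: the function which is `1` at `k` and `0`
elsewhere. -/
noncomputable def stdBasis {I : Type*} [TopologicalSpace I] [DiscreteTopology I]
    [DecidableEq I] (k : I) : C₀(I, ℂ) :=
  ⟨⟨fun i => if i = k then 1 else 0, continuous_of_discreteTopology⟩, by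
    refine Filter.Tendsto.congr' ?_ tendsto_const_nhds
    filter_upwards [(isCompact_singleton (x := k)).compl_mem_cocompact] with i hi
    simp only [Set.mem_compl_iff, Set.mem_singleton_iff] at hi
    simp [hi]⟩

lemma c0_norm_apply_le {J : Type*} [TopologicalSpace J] (f : C₀(J, ℂ)) (j : J) :
    ‖f j‖ ≤ ‖f‖ := by
  rw [← ZeroAtInftyContinuousMap.norm_toBCF_eq_norm]
  exact BoundedContinuousFunction.norm_coe_le_norm f.toBCF j

lemma c0_norm_le {I : Type*} [TopologicalSpace I] (f : C₀(I, ℂ)) {C : ℝ} (hC : 0 ≤ C)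
    (h : ∀ i, ‖f i‖ ≤ C) : ‖f‖ ≤ C := by
  rw [← ZeroAtInftyContinuousMap.norm_toBCF_eq_norm]
  exact (BoundedContinuousFunction.norm_le hC).2 h

lemma c0_norm_smul {I : Type*} [TopologicalSpace I] (v : C₀(I, ℂ)) (c : ℂ) :
    ‖c • v‖ = ‖c‖ * ‖v‖ := by
  rw [← ZeroAtInftyContinuousMap.norm_toBCF_eq_norm, ← ZeroAtInftyContinuousMap.norm_toBCF_eq_norm]
  have : (c • v).toBCF = c • v.toBCF := rfl
  rw [this, norm_smul]

lemma stmt4_aux {I J : Type*} [TopologicalSpace I] [DiscreteTopology I] [DecidableEq I]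
    [TopologicalSpace J] [DiscreteTopology J]
    (L : C₀(I, ℂ) →ₗᵢ[ℂ] C₀(J, ℂ)) (k : I) (j : J) (hj : ‖L (stdBasis k) j‖ = 1)
    (v : C₀(I, ℂ)) (hv : v k = 0) (hv1 : ‖v‖ ≤ 1) :
    L v j = 0 := by
  set a := L (stdBasis k) j with ha
  set b := L v j with hb
  by_contra hb0
  set θ : ℂ := (‖b‖ : ℂ) * a / b with hθ
  have hbn : ‖b‖ ≠ 0 := norm_ne_zero_iff.2 hb0
  have hθn : ‖θ‖ = 1 := by
    rw [hθ, norm_div, norm_mul, hj, mul_one, Complex.norm_real, norm_norm]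
    exact div_self hbn
  have key : ‖stdBasis k + θ • v‖ ≤ 1 := by
    apply c0_norm_le _ zero_le_one
    intro i
    by_cases hik : i = k
    · subst hik
      simp [ZeroAtInftyContinuousMap.coe_add, ZeroAtInftyContinuousMap.coe_smul, hv,
        stdBasis]
    · have h0 : stdBasis k i = 0 := by simp [stdBasis, hik]
      calc ‖(stdBasis k + θ • v) i‖ = ‖θ • v i‖ := by
            simp [ZeroAtInftyContinuousMap.coe_add, ZeroAtInftyContinuousMap.coe_smul, h0]
        _ ≤ ‖v‖ := by
            rw [norm_smul, hθn, one_mul]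
            exact c0_norm_apply_le v i
        _ ≤ 1 := hv1
  have hL : ‖L (stdBasis k + θ • v) j‖ ≤ 1 :=
    (c0_norm_apply_le _ j).trans (by rw [L.norm_map]; exact key)
  have hval : L (stdBasis k + θ • v) j = a + θ * b := by
    rw [map_add, map_smul]
    simp [ZeroAtInftyContinuousMap.coe_add, ZeroAtInftyContinuousMap.coe_smul, ← ha, ← hb,
      smul_eq_mul]
  have hθb : θ * b = (‖b‖ : ℂ) * a := by
    rw [hθ, div_mul_eq_mul_div, mul_div_assoc, div_self hb0, mul_one]
  rw [hval, hθb, ← one_mul a, ← mul_assoc, mul_one, ← add_mul] at hL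
  rw [norm_mul, hj, mul_one] at hL
  have heq : ‖(1 : ℂ) + (‖b‖ : ℂ)‖ = 1 + ‖b‖ := by
    rw [show ((1 : ℂ) + (‖b‖ : ℂ)) = (((1 + ‖b‖ : ℝ)) : ℂ) by push_cast; ring,
      Complex.norm_real, Real.norm_of_nonneg (by positivity)]
  rw [heq] at hL
  have : ‖b‖ = 0 := le_antisymm (by linarith) (norm_nonneg b)
  exact hb0 (norm_eq_zero.mp this)

/-- Let `L : c₀(I) → c₀(J)` be a linear isometry, `k ∈ I`, and `j ∈ J` with
`|L(e^k)(j)| = 1`.  Then for every `v ∈ c₀(I)` with `v(k) = 0` one has `L(v)(j) = 0`. -/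
theorem stmt4 {I J : Type*} [TopologicalSpace I] [DiscreteTopology I] [DecidableEq I]
    [TopologicalSpace J] [DiscreteTopology J]
    (L : C₀(I, ℂ) →ₗᵢ[ℂ] C₀(J, ℂ)) (k : I) (j : J) (hj : ‖L (stdBasis k) j‖ = 1)
    (v : C₀(I, ℂ)) (hv : v k = 0) :
    L v j = 0 := by
  by_cases hv0 : v = 0
  · simp [hv0]
  · have hn : (0:ℝ) < ‖v‖ := norm_pos_iff.2 hv0
    have key := stmt4_aux L k j hj ((‖v‖⁻¹ : ℂ) • v)
      (by rw [ZeroAtInftyContinuousMap.smul_apply, hv, smul_zero])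
      (by
        rw [c0_norm_smul]
        simp only [norm_inv, Complex.norm_real, norm_norm]
        rw [inv_mul_cancel₀ hn.ne'])
    rw [map_smul, ZeroAtInftyContinuousMap.smul_apply, smul_eq_mul] at key
    have h3 : ((‖v‖ : ℂ))⁻¹ ≠ 0 := by
      simp [Complex.ofReal_ne_zero, hn.ne']
    exact (mul_eq_zero.mp key).resolve_left h3
end

section
/- Let L : c₀(I) → c₀(J) be a linear isometry, and for each k ∈ I choose j(k) ∈ J with |L(e^k)(j(k))| = 1. Then the map k ↦ j(k) is injective. -/
open scoped ZeroAtInfty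

/-- Let `L : c₀(I) → c₀(J)` be a linear isometry, and for each `k ∈ I` choose `j(k) ∈ J`
with `|L(e^k)(j(k))| = 1`.  Then the map `k ↦ j(k)` is injective. -/
theorem stmt5 {I J : Type*} [TopologicalSpace I] [DiscreteTopology I] [DecidableEq I]
    [TopologicalSpace J] [DiscreteTopology J]
    (L : C₀(I, ℂ) →ₗᵢ[ℂ] C₀(J, ℂ)) (j : I → J)
    (hj : ∀ k : I, ‖L (stdBasis k) (j k)‖ = 1) :
    Function.Injective j := by
  intro k₁ k₂ hk
  by_contra hne
  set a : ℂ := L (stdBasis k₁) (j k₁) with ha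
  set b : ℂ := L (stdBasis k₂) (j k₂) with hb
  have hna : ‖a‖ = 1 := hj k₁
  have hnb : ‖b‖ = 1 := hj k₂
  have hb0 : b ≠ 0 := by intro h; rw [h] at hnb; simp at hnb
  set c : ℂ := a / b with hc
  have hnc : ‖c‖ = 1 := by rw [hc, norm_div, hna, hnb]; norm_num
  set f : C₀(I, ℂ) := stdBasis k₁ + c • stdBasis k₂ with hf
  -- ‖f‖ ≤ 1
  have hfle : ‖f‖ ≤ 1 := by
    rw [← ZeroAtInftyContinuousMap.norm_toBCF_eq_norm]
    refine BoundedContinuousFunction.norm_le (by norm_num) |>.mpr fun i => ?_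
    have : f.toBCF i = f i := rfl
    rw [this]
    simp only [hf, ZeroAtInftyContinuousMap.coe_add, ZeroAtInftyContinuousMap.coe_smul,
      Pi.add_apply, Pi.smul_apply, stdBasis]
    by_cases h1 : i = k₁
    · subst h1
      have h2 : i ≠ k₂ := fun h => hne (h ▸ rfl)
      simp [h2]
    · by_cases h2 : i = k₂
      · simp [h1, h2, Ne.symm hne, smul_eq_mul, hnc]
      · simp [h1, h2]
  -- but L f at j k₁ has norm 2
  have key : L f (j k₁) = a + c * b := by
    rw [hf, map_add, map_smul]
    simp [hk, ha, hb, smul_eq_mul]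
  have hcb : c * b = a := by rw [hc]; exact div_mul_cancel₀ a hb0
  have h2 : ‖L f (j k₁)‖ = 2 := by
    rw [key, hcb, ← two_mul, norm_mul, hna]
    norm_num
  have hle : ‖L f (j k₁)‖ ≤ ‖L f‖ := by
    rw [← ZeroAtInftyContinuousMap.norm_toBCF_eq_norm]
    exact (L f).toBCF.norm_coe_le_norm (j k₁)
  rw [L.norm_map] at hle
  rw [h2] at hle
  linarith
end

section
/- There is no continuous linear projection π : ℂ³ → ℂ³ (with the sup norm on ℂ³) of norm 1 whose range is the subspace L(ℂ²) = {(x, y, x+y) : x, y ∈ ℂ}. -/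
open Complex

/-- A unimodular "alignment" factor: `c * sgnc c = |c|`. -/
noncomputable def sgnc (c : ℂ) : ℂ := if c = 0 then 1 else (starRingEnd ℂ) c / (‖c‖ : ℂ)

lemma sgnc_abs (c : ℂ) : ‖sgnc c‖ = 1 := by
  unfold sgnc
  split
  · simp
  · rename_i h
    rw [norm_div, Complex.norm_conj, Complex.norm_real, norm_norm,
      div_self (norm_ne_zero_iff.mpr h)]

lemma mul_sgnc (c : ℂ) : c * sgnc c = (‖c‖ : ℂ) := by
  unfold sgnc
  split
  · simp_all
  · rename_i h
    have h' : (‖c‖ : ℂ) ≠ 0 := by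
      simpa using norm_ne_zero_iff.mpr h
    field_simp
    rw [Complex.mul_conj, ← Complex.sq_norm]
    push_cast
    ring

/-- There is no continuous linear projection `π : ℂ³ → ℂ³` (sup norm) of norm 1 whose
range is the subspace `{(x, y, x+y) : x, y ∈ ℂ}`. -/
theorem stmt7 :
    ¬ ∃ π : (Fin 3 → ℂ) →L[ℂ] (Fin 3 → ℂ), π.comp π = π ∧ ‖π‖ = 1 ∧
      Set.range π = {v : Fin 3 → ℂ | v 2 = v 0 + v 1} := by
  rintro ⟨π, hidem, hnorm, hrange⟩
  -- π fixes every vector in the plane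
  have hfix : ∀ v : Fin 3 → ℂ, v 2 = v 0 + v 1 → π v = v := by
    intro v hv
    have hv' : v ∈ Set.range π := by rw [hrange]; exact hv
    obtain ⟨w, hw⟩ := hv'
    have := congrFun (congrArg DFunLike.coe hidem) w
    simp only [ContinuousLinearMap.comp_apply] at this
    rw [← hw, this]
  -- every value of π is in the plane
  have hmem : ∀ v : Fin 3 → ℂ, (π v) 2 = (π v) 0 + (π v) 1 := by
    intro v
    have : π v ∈ Set.range π := ⟨v, rfl⟩
    rwa [hrange] at this
  have hA : π ![1, 0, 1] = ![1, 0, 1] := hfix _ (by norm_num [Matrix.cons_val_two, Matrix.tail_cons, Matrix.head_cons])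
  have hB : π ![0, 1, 1] = ![0, 1, 1] := hfix _ (by norm_num [Matrix.cons_val_two, Matrix.tail_cons, Matrix.head_cons])
  set p : Fin 3 → ℂ := π ![0, 0, 1] with hp
  have hp2 : p 2 = p 0 + p 1 := hmem _
  -- decomposition of a general vector
  have key : ∀ x y c : ℂ,
      π ![x, y, c] = x • ![(1:ℂ), 0, 1] + y • ![(0:ℂ), 1, 1] + (c - x - y) • p := by
    intro x y c
    have hdecomp : (![x, y, c] : Fin 3 → ℂ)
        = x • ![(1:ℂ), 0, 1] + y • ![(0:ℂ), 1, 1] + (c - x - y) • ![(0:ℂ), 0, 1] := by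
      funext i
      fin_cases i <;> simp
    rw [hdecomp, map_add, map_add, map_smul, map_smul, map_smul, hA, hB]
  -- the norm bound, componentwise
  have bound : ∀ x y c : ℂ, ‖x‖ ≤ 1 → ‖y‖ ≤ 1 → ‖c‖ ≤ 1 →
      ∀ i : Fin 3,
        ‖(x • ![(1:ℂ), 0, 1] + y • ![(0:ℂ), 1, 1] + (c - x - y) • p) i‖ ≤ 1 := by
    intro x y c hx hy hc i
    rw [← key]
    have hn : ‖(![x, y, c] : Fin 3 → ℂ)‖ ≤ 1 := by
      rw [pi_norm_le_iff_of_nonneg zero_le_one]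
      intro j
      fin_cases j <;> simpa
    calc ‖(π ![x, y, c]) i‖ ≤ ‖π ![x, y, c]‖ := by
            exact norm_le_pi_norm _ i
      _ ≤ ‖π‖ * ‖(![x, y, c] : Fin 3 → ℂ)‖ := π.le_opNorm _
      _ ≤ 1 := by rw [hnorm, one_mul]; exact hn
  -- first coordinate of p is zero
  have hα : p 0 = 0 := by
    set α := p 0 with hαdef
    have h := bound (sgnc (1 - α)) (-(sgnc α)) (sgnc α)
      (le_of_eq (sgnc_abs _)) (by rw [norm_neg]; exact le_of_eq (sgnc_abs _))
      (le_of_eq (sgnc_abs _)) 0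
    have e : (sgnc (1 - α) • ![(1:ℂ), 0, 1] + (-(sgnc α)) • ![(0:ℂ), 1, 1]
        + (sgnc α - sgnc (1 - α) - -(sgnc α)) • p) 0
        = ((‖1 - α‖ + 2 * ‖α‖ : ℝ) : ℂ) := by
      simp only [Pi.add_apply, Pi.smul_apply, Matrix.cons_val_zero, smul_eq_mul]
      push_cast
      rw [← mul_sgnc (1 - α), ← mul_sgnc α]
      ring
    rw [e, Complex.norm_real, Real.norm_eq_abs, _root_.abs_of_nonneg (by positivity)] at h
    have h1 : (1 : ℝ) ≤ ‖1 - α‖ + ‖α‖ := by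
      have := norm_add_le (1 - α) α
      simpa using this
    have h0 : ‖α‖ ≤ 0 := by linarith
    have : ‖α‖ = 0 := le_antisymm h0 (norm_nonneg α)
    exact norm_eq_zero.mp this
  -- second coordinate of p is zero
  have hβ : p 1 = 0 := by
    set β := p 1 with hβdef
    have h := bound (-(sgnc β)) (sgnc (1 - β)) (sgnc β)
      (by rw [norm_neg]; exact le_of_eq (sgnc_abs _)) (le_of_eq (sgnc_abs _))
      (le_of_eq (sgnc_abs _)) 1
    have e : ((-(sgnc β)) • ![(1:ℂ), 0, 1] + (sgnc (1 - β)) • ![(0:ℂ), 1, 1]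
        + (sgnc β - -(sgnc β) - sgnc (1 - β)) • p) 1
        = ((‖1 - β‖ + 2 * ‖β‖ : ℝ) : ℂ) := by
      simp only [Pi.add_apply, Pi.smul_apply, Matrix.cons_val_one, Matrix.head_cons,
        smul_eq_mul]
      push_cast
      rw [← mul_sgnc (1 - β), ← mul_sgnc β]
      ring
    rw [e, Complex.norm_real, Real.norm_eq_abs, _root_.abs_of_nonneg (by positivity)] at h
    have h1 : (1 : ℝ) ≤ ‖1 - β‖ + ‖β‖ := by
      have := norm_add_le (1 - β) β
      simpa using this
    have h0 : ‖β‖ ≤ 0 := by linarith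
    have : ‖β‖ = 0 := le_antisymm h0 (norm_nonneg β)
    exact norm_eq_zero.mp this
  -- now derive the contradiction with v = (1,1,0)
  have h := bound 1 1 0 (by simp) (by simp) (by simp) 2
  have e : ((1 : ℂ) • ![(1:ℂ), 0, 1] + (1 : ℂ) • ![(0:ℂ), 1, 1]
      + ((0 : ℂ) - 1 - 1) • p) 2 = 2 := by
    simp only [Pi.add_apply, Pi.smul_apply, smul_eq_mul]
    rw [hp2, hα, hβ]
    norm_num [Matrix.cons_val_two, Matrix.tail_cons, Matrix.head_cons]
  rw [e] at h
  norm_num at h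
end

section
/- Let π : ℂ³ → ℂ³ (sup norm) be a linear projection of norm 1 onto the subspace {(x,y,x+y) : x,y ∈ ℂ}. Then π vanishes on {0} × ℂ × {0}. -/
lemma stmt8_aux (a : ℂ) (h : ∀ l : ℂ, ‖l‖ ≤ 1 → ‖1 + l * a‖ ≤ 1) : a = 0 := by
  by_contra ha
  have hna : (0:ℝ) < ‖a‖ := norm_pos_iff.2 ha
  set l : ℂ := (starRingEnd ℂ a) / (‖a‖ : ℂ) with hldef
  have hl : ‖l‖ ≤ 1 := by
    rw [hldef, norm_div, RCLike.norm_conj, Complex.norm_real, Real.norm_eq_abs,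
      abs_of_nonneg hna.le, div_self hna.ne']
  have key : l * a = (‖a‖ : ℂ) := by
    rw [hldef, div_mul_eq_mul_div, mul_comm, Complex.mul_conj']
    rw [sq, mul_div_assoc, div_self (by exact_mod_cast hna.ne'), mul_one]
  have hfin := h l hl
  rw [key] at hfin
  have heq : ‖(1:ℂ) + (‖a‖:ℂ)‖ = 1 + ‖a‖ := by
    rw [show (1:ℂ) + (‖a‖:ℂ) = ((1+‖a‖:ℝ):ℂ) by push_cast; ring, Complex.norm_real,
      Real.norm_eq_abs, abs_of_nonneg (by positivity)]
  rw [heq] at hfin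
  linarith

/-- Let `π : ℂ³ → ℂ³` (sup norm) be a linear projection of norm 1 onto the subspace
`{(x,y,x+y) : x,y ∈ ℂ}`.  Then `π` vanishes on `{0} × ℂ × {0}`. -/
theorem stmt8 (π : (Fin 3 → ℂ) →L[ℂ] (Fin 3 → ℂ)) (hidem : π.comp π = π)
    (hnorm : ‖π‖ = 1)
    (hrange : Set.range π = {v : Fin 3 → ℂ | v 2 = v 0 + v 1}) :
    ∀ c : ℂ, π ![0, c, 0] = 0 := by
  -- π fixes its range
  have hfix : ∀ v : Fin 3 → ℂ, v 2 = v 0 + v 1 → π v = v := by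
    intro v hv
    have : v ∈ Set.range π := by rw [hrange]; exact hv
    obtain ⟨u, hu⟩ := this
    have := congrFun (congrArg (fun f => f.toFun) hidem) u
    change π (π u) = π u at this
    rw [← hu]
    simpa using this
  set w : Fin 3 → ℂ := π ![0, 1, 0] with hw
  have hwr : w 2 = w 0 + w 1 := by
    have : w ∈ Set.range π := ⟨_, rfl⟩
    rw [hrange] at this
    exact this
  have h101 : π ![1, 0, 1] = ![1, 0, 1] := by
    apply hfix
    simp
  -- key estimate
  have hbound : ∀ l : ℂ, ‖l‖ ≤ 1 → ∀ i : Fin 3, ‖((![1,0,1] : Fin 3 → ℂ) + l • w) i‖ ≤ 1 := by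
    intro l hl i
    have hdecomp : (![1, l, 1] : Fin 3 → ℂ) = ![1,0,1] + l • ![0,1,0] := by
      funext j
      fin_cases j <;> simp
    have h1 : π ![1, l, 1] = ![1,0,1] + l • w := by
      rw [hdecomp, map_add, map_smul, h101, hw]
    have h2 : ‖(![1, l, 1] : Fin 3 → ℂ)‖ ≤ 1 := by
      rw [pi_norm_le_iff_of_nonneg zero_le_one]
      intro j
      fin_cases j <;> simp [hl]
    have h3 : ‖π ![1, l, 1]‖ ≤ 1 := by
      calc ‖π ![1, l, 1]‖ ≤ ‖π‖ * ‖(![1, l, 1] : Fin 3 → ℂ)‖ := π.le_opNorm _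
        _ ≤ 1 := by rw [hnorm]; linarith
    calc ‖((![1,0,1] : Fin 3 → ℂ) + l • w) i‖ ≤ ‖![1,0,1] + l • w‖ := norm_le_pi_norm _ i
      _ = ‖π ![1, l, 1]‖ := by rw [h1]
      _ ≤ 1 := h3
  have hw0 : w 0 = 0 := by
    apply stmt8_aux
    intro l hl
    have := hbound l hl 0
    simpa using this
  have hw2 : w 2 = 0 := by
    apply stmt8_aux
    intro l hl
    have := hbound l hl 2
    simpa using this
  have hw1 : w 1 = 0 := by
    have := hwr
    rw [hw0, hw2] at this
    simpa using this.symm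
  have hwz : w = 0 := by
    funext j
    fin_cases j <;> simp [hw0, hw1, hw2]
  intro c
  have : (![0, c, 0] : Fin 3 → ℂ) = c • ![0,1,0] := by
    funext j
    fin_cases j <;> simp
  rw [this, map_smul, ← hw, hwz, smul_zero]
end

section
/- c₀(ℕ) is not complemented in ℓ^∞(ℕ): there is no continuous linear projection from ℓ^∞(ℕ) onto the subspace c₀(ℕ). -/
open scoped ENNReal

noncomputable section
namespace Stmt9

/-- encoded prefix function -/
def fA (x : ℕ → Bool) (n : ℕ) : ℕ := Encodable.encode (List.ofFn (fun i : Fin n => x i))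

lemma fA_inj (x : ℕ → Bool) : Function.Injective (fA x) := by
  intro n m h
  have := Encodable.encode_injective h
  have hlen := congrArg List.length this
  simpa using hlen

def A (x : ℕ → Bool) : Set ℕ := Set.range (fA x)

lemma A_infinite (x : ℕ → Bool) : (A x).Infinite :=
  Set.infinite_range_of_injective (fA_inj x)

lemma A_almost_disjoint {x y : ℕ → Bool} (hxy : x ≠ y) : (A x ∩ A y).Finite := by
  obtain ⟨k, hk⟩ := Function.ne_iff.mp hxy
  have hmain : A x ∩ A y ⊆ fA x '' (Set.Iic k) := by
    rintro z ⟨⟨n, rfl⟩, ⟨m, hm⟩⟩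
    have hl : List.ofFn (fun i : Fin m => y i) = List.ofFn (fun i : Fin n => x i) :=
      Encodable.encode_injective hm
    have hnm : m = n := by simpa using congrArg List.length hl
    subst hnm
    have hfun : ∀ i : Fin m, y i = x i := fun i => by
      have := congrArg (fun l => l[(i : ℕ)]?) hl
      simpa using this
    refine ⟨m, ?_, rfl⟩
    by_contra hmk
    simp only [Set.mem_Iic, not_le] at hmk
    exact hk (hfun ⟨k, hmk⟩).symm
  exact ((Set.finite_Iic k).image _).subset hmain


open Classical in
lemma uncountable_pi : ¬ Countable (ℕ → Bool) := by
  intro h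
  have hS : Countable (Set ℕ) := by
    have hinj : Function.Injective (fun (s : Set ℕ) (n : ℕ) => decide (n ∈ s)) := by
      intro s t hst
      ext n
      have h2 : decide (n ∈ s) = decide (n ∈ t) := congrFun hst n
      constructor <;> intro hn
      · exact of_decide_eq_true ((decide_eq_true hn) ▸ h2 ▸ rfl)
      · exact of_decide_eq_true (h2.trans (decide_eq_true hn))
    exact hinj.countable
  obtain ⟨f, hf⟩ := (countable_iff_exists_injective (Set ℕ)).mp hS
  exact Function.cantor_injective f hf

abbrev L := lp (fun _ : ℕ => ℂ) ∞

open Classical in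
def uFn (x : ℕ → Bool) : ℕ → ℂ := fun n => if n ∈ A x then 1 else 0

open Classical in
lemma uFn_mem (x : ℕ → Bool) : Memℓp (uFn x) ∞ := by
  apply memℓp_infty
  refine ⟨1, ?_⟩
  rintro r ⟨n, rfl⟩
  by_cases h : n ∈ A x <;> simp [uFn, h]

def U (x : ℕ → Bool) : L := ⟨uFn x, uFn_mem x⟩

lemma U_apply (x : ℕ → Bool) (n : ℕ) : (U x : ℕ → ℂ) n = uFn x n := rfl

lemma U_not_tendsto (x : ℕ → Bool) :
    ¬ Filter.Tendsto (fun n => (U x : ℕ → ℂ) n) Filter.atTop (nhds 0) := by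
  intro h
  have h2 := Metric.tendsto_atTop.mp h (1/2) (by norm_num)
  obtain ⟨N, hN⟩ := h2
  obtain ⟨n, hn, hnN⟩ := (A_infinite x).exists_gt N
  have := hN n hnN.le
  rw [U_apply] at this
  simp [uFn, hn, Complex.dist_eq] at this
  norm_num at this


set_option maxHeartbeats 1000000 in
open Classical in
lemma key (Q : L →L[ℂ] L)
    (hQc : ∀ g : L, Filter.Tendsto (fun n => (g : ℕ → ℂ) n) Filter.atTop (nhds 0) → Q g = 0)
    (n : ℕ) {ε : ℝ} (hε : 0 < ε) :
    {x : ℕ → Bool | ε ≤ ‖(Q (U x) : ℕ → ℂ) n‖}.Finite := by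
  by_contra hfin
  obtain ⟨k, hk⟩ := exists_nat_gt (‖Q‖ / ε)
  obtain ⟨F, hFsub, hFcard⟩ := Set.Infinite.exists_subset_card_eq hfin k
  set a : (ℕ → Bool) → ℂ := fun x => (Q (U x) : ℕ → ℂ) n with ha
  set θ : (ℕ → Bool) → ℂ :=
    fun x => if a x = 0 then 1 else (starRingEnd ℂ) (a x) / ‖a x‖ with hθ
  have hθ_norm : ∀ x, ‖θ x‖ = 1 := by
    intro x
    by_cases h : a x = 0
    · simp [hθ, h]
    · simp only [hθ, if_neg h, norm_div, RCLike.norm_conj, Complex.norm_real,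
        Real.norm_eq_abs, abs_norm]
      exact div_self (norm_ne_zero_iff.mpr h)
  have hθ_mul : ∀ x, θ x * a x = (‖a x‖ : ℂ) := by
    intro x
    by_cases h : a x = 0
    · simp [hθ, h]
    · simp only [hθ, if_neg h]
      have hne : ‖a x‖ ≠ 0 := norm_ne_zero_iff.mpr h
      rw [div_mul_eq_mul_div, mul_comm, Complex.mul_conj]
      rw [Complex.normSq_eq_norm_sq]
      have hr : (‖a x‖ ^ 2 : ℝ) / ‖a x‖ = ‖a x‖ := by
        rw [sq, mul_div_assoc, div_self hne, mul_one]
      rw [← Complex.ofReal_div, hr]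
  set g : L := ∑ x ∈ F, θ x • U x with hg
  set B : Set ℕ := ⋃ x ∈ F, ⋃ y ∈ F, ⋃ (_ : x ≠ y), A x ∩ A y with hBdef
  have hB : B.Finite :=
    Set.Finite.biUnion F.finite_toSet fun x _ =>
      Set.Finite.biUnion F.finite_toSet fun y _ => by
        by_cases hxy : x ≠ y
        · exact (A_almost_disjoint hxy).subset (Set.iUnion_subset fun _ => subset_rfl)
        · have : (⋃ (_ : x ≠ y), A x ∩ A y) = ∅ :=
            Set.iUnion_eq_empty.mpr fun h => absurd h hxy
          rw [this]; exact Set.finite_empty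
  -- coordinates of g
  have hg_coord : ∀ m : ℕ, (g : ℕ → ℂ) m = ∑ x ∈ F, θ x * uFn x m := by
    intro m
    rw [hg, lp.coeFn_sum, Finset.sum_apply]
    refine Finset.sum_congr rfl fun x _ => ?_
    rw [lp.coeFn_smul, Pi.smul_apply, smul_eq_mul, U_apply]
  set w : ℕ → ℂ := B.indicator (⇑g) with hw
  have hw_mem : Memℓp w ∞ := by
    apply memℓp_infty
    refine ⟨‖g‖, ?_⟩
    rintro r ⟨m, rfl⟩
    by_cases h : m ∈ B
    · simp only [hw, Set.indicator_of_mem h]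
      exact lp.norm_apply_le_norm ENNReal.top_ne_zero g m
    · show ‖w m‖ ≤ ‖g‖
      have hz : w m = 0 := by rw [hw]; exact Set.indicator_of_notMem h _
      rw [hz, norm_zero]; exact norm_nonneg g
  set v : ℕ → ℂ := ⇑g - w with hv
  have hv_mem : Memℓp v ∞ := (lp.memℓp g).sub hw_mem
  set V : L := ⟨v, hv_mem⟩ with hV
  set W : L := ⟨w, hw_mem⟩ with hW
  have hVW : g = V + W := by
    apply lp.ext
    change ⇑g = v + w
    rw [hv]; ring
  have hW0 : Q W = 0 := by
    apply hQc
    obtain ⟨N, hN⟩ := hB.bddAbove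
    have hev : ∀ m ≥ N + 1, (W : ℕ → ℂ) m = 0 := by
      intro m hm
      have hmB : m ∉ B := fun hmem => by
        have := hN hmem; omega
      change w m = 0
      rw [hw, Set.indicator_of_notMem hmB]
    refine Filter.Tendsto.congr' ?_ tendsto_const_nhds
    filter_upwards [Filter.eventually_atTop.mpr ⟨N + 1, hev⟩] with m hm
    exact hm.symm
  have hV1 : ‖V‖ ≤ 1 := by
    apply lp.norm_le_of_forall_le zero_le_one
    intro m
    change ‖v m‖ ≤ 1
    by_cases hmB : m ∈ B
    · rw [hv]; simp [hw, Set.indicator_of_mem hmB]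
    · have hvm : v m = (g : ℕ → ℂ) m := by
        rw [hv]; simp [hw, Set.indicator_of_notMem hmB]
      rw [hvm, hg_coord m]
      by_cases hex : ∃ x₀ ∈ F, m ∈ A x₀
      · obtain ⟨x₀, hx₀F, hx₀⟩ := hex
        have hsum : ∑ x ∈ F, θ x * uFn x m = θ x₀ * uFn x₀ m := by
          apply Finset.sum_eq_single_of_mem x₀ hx₀F
          intro y hyF hne
          have hmy : m ∉ A y := by
            intro hmem
            apply hmB
            rw [hBdef]
            refine Set.mem_biUnion hyF ?_
            refine Set.mem_biUnion hx₀F ?_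
            exact Set.mem_iUnion.mpr ⟨hne, hmem, hx₀⟩
          simp [uFn, hmy]
        rw [hsum]
        simp only [uFn, if_pos hx₀, mul_one]
        exact le_of_eq (hθ_norm x₀)
      · push_neg at hex
        have hsum : ∑ x ∈ F, θ x * uFn x m = 0 := by
          apply Finset.sum_eq_zero
          intro y hyF
          simp [uFn, hex y hyF]
        rw [hsum]; simp
  -- upper bound
  have hupper : ‖(Q g : ℕ → ℂ) n‖ ≤ ‖Q‖ := by
    have h1 : Q g = Q V := by rw [hVW, map_add, hW0, add_zero]
    calc ‖(Q g : ℕ → ℂ) n‖ ≤ ‖Q g‖ := lp.norm_apply_le_norm ENNReal.top_ne_zero _ n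
      _ = ‖Q V‖ := by rw [h1]
      _ ≤ ‖Q‖ * ‖V‖ := Q.le_opNorm V
      _ ≤ ‖Q‖ * 1 := by
          apply mul_le_mul_of_nonneg_left hV1 (norm_nonneg Q)
      _ = ‖Q‖ := mul_one _
  -- lower bound
  have hcoord : (Q g : ℕ → ℂ) n = ((∑ x ∈ F, ‖a x‖ : ℝ) : ℂ) := by
    have h1 : Q g = ∑ x ∈ F, θ x • Q (U x) := by
      rw [hg, map_sum]
      exact Finset.sum_congr rfl fun x _ => (Q.map_smul _ _)
    rw [h1, lp.coeFn_sum, Finset.sum_apply]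
    push_cast
    refine Finset.sum_congr rfl fun x hx => ?_
    rw [lp.coeFn_smul, Pi.smul_apply, smul_eq_mul]
    exact hθ_mul x
  have hlower : (k : ℝ) * ε ≤ ‖(Q g : ℕ → ℂ) n‖ := by
    rw [hcoord]
    rw [Complex.norm_real]
    have h1 : ∑ x ∈ F, ‖a x‖ ≥ ∑ _x ∈ F, ε :=
      Finset.sum_le_sum fun x hx => hFsub hx
    rw [Finset.sum_const, hFcard, nsmul_eq_mul] at h1
    calc (k : ℝ) * ε ≤ ∑ x ∈ F, ‖a x‖ := h1
      _ ≤ |∑ x ∈ F, ‖a x‖| := le_abs_self _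
      _ = ‖∑ x ∈ F, ‖a x‖‖ := (Real.norm_eq_abs _).symm
  have : ‖Q‖ < (k : ℝ) * ε := by
    rw [div_lt_iff₀ hε] at hk
    linarith
  linarith
end Stmt9
end

open Stmt9 in
/-- `c₀(ℕ)` is not complemented in `ℓ^∞(ℕ)`: there is no continuous linear projection
from `ℓ^∞(ℕ)` onto the subspace of sequences tending to `0`. -/
theorem stmt9 :
    ¬ ∃ π : lp (fun _ : ℕ => ℂ) ∞ →L[ℂ] lp (fun _ : ℕ => ℂ) ∞, π.comp π = π ∧
      Set.range π =
        {x : lp (fun _ : ℕ => ℂ) ∞ | Filter.Tendsto (fun n => x n) Filter.atTop (nhds 0)} := by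
  rintro ⟨π, hidem, hrange⟩
  set Q : L →L[ℂ] L := ContinuousLinearMap.id ℂ L - π with hQ
  have hfix : ∀ y : L, y ∈ Set.range π → π y = y := by
    rintro y ⟨z, rfl⟩
    exact ContinuousLinearMap.ext_iff.mp hidem z
  have hQc : ∀ g : L, Filter.Tendsto (fun n => (g : ℕ → ℂ) n) Filter.atTop (nhds 0) →
      Q g = 0 := by
    intro g hg
    have hmem : g ∈ Set.range π := by rw [hrange]; exact hg
    have h2 : π g = g := hfix g hmem
    rw [hQ]
    simp [h2]
  set S : Set (ℕ → Bool) :=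
    ⋃ (n : ℕ) (m : ℕ), {x | 1 / ((m : ℝ) + 1) ≤ ‖(Q (U x) : ℕ → ℂ) n‖} with hSdef
  have hS : S.Countable :=
    Set.countable_iUnion fun n => Set.countable_iUnion fun m =>
      (key Q hQc n (by positivity)).countable
  have hex : ∃ x, x ∉ S := by
    by_contra hall
    push_neg at hall
    have huniv : (Set.univ : Set (ℕ → Bool)).Countable := hS.mono fun x _ => hall x
    exact uncountable_pi (Set.countable_univ_iff.mp huniv)
  obtain ⟨x, hx⟩ := hex
  have hzero : Q (U x) = 0 := by
    apply lp.ext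
    funext n
    have hlt : ∀ m : ℕ, ‖(Q (U x) : ℕ → ℂ) n‖ < 1 / ((m : ℝ) + 1) := by
      intro m
      by_contra hge
      push_neg at hge
      exact hx (Set.mem_iUnion.mpr ⟨n, Set.mem_iUnion.mpr ⟨m, hge⟩⟩)
    have h0 : ‖(Q (U x) : ℕ → ℂ) n‖ ≤ 0 := by
      by_contra hpos
      push_neg at hpos
      obtain ⟨m, hm⟩ := exists_nat_one_div_lt hpos
      have := hlt m
      linarith
    have heq : ‖(Q (U x) : ℕ → ℂ) n‖ = 0 := le_antisymm h0 (norm_nonneg _)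
    show (Q (U x) : ℕ → ℂ) n = ((0 : L) : ℕ → ℂ) n
    rw [lp.coeFn_zero, Pi.zero_apply]
    exact norm_eq_zero.mp heq
  have hUfix : π (U x) = U x := by
    have h1 : Q (U x) = U x - π (U x) := by
      rw [hQ]; simp
    rw [hzero] at h1
    have := sub_eq_zero.mp h1.symm
    exact this.symm
  have hmem : U x ∈ Set.range π := ⟨U x, hUfix⟩
  rw [hrange] at hmem
  exact U_not_tendsto x hmem
end

section
/- For every a in the open unit ball B of ℓ^∞(I), the map φ_a defined coordinatewise by φ_a(f)(i) = (f(i) + a(i)) / (1 + conj(a(i)) · f(i)) maps B bijectively onto B, with inverse φ_{-a}. -/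
open scoped ENNReal ComplexConjugate

private lemma one_add_ne {w : ℂ} (hw : ‖w‖ < 1) : (1 : ℂ) + w ≠ 0 := by
  intro h
  have : w = -1 := by linear_combination h
  rw [this] at hw
  simp at hw

private lemma normSq_key (α z : ℂ) :
    Complex.normSq (1 + conj α * z) - Complex.normSq (z + α)
      = (1 - Complex.normSq z) * (1 - Complex.normSq α) := by
  simp only [Complex.normSq_apply, Complex.add_re, Complex.add_im, Complex.mul_re,
    Complex.mul_im, Complex.conj_re, Complex.conj_im, Complex.one_re, Complex.one_im]
  ring

set_option maxHeartbeats 1000000 in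
private lemma mob_bound {r s : ℝ} (hr : r < 1) (hs : s < 1)
    {α z : ℂ} (hα : ‖α‖ ≤ r) (hz : ‖z‖ ≤ s) :
    ‖(z + α) / (1 + conj α * z)‖
      ≤ Real.sqrt (1 - (1 - s ^ 2) * (1 - r ^ 2) / (1 + r * s) ^ 2) := by
  have hr0 : 0 ≤ r := le_trans (norm_nonneg α) hα
  have hs0 : 0 ≤ s := le_trans (norm_nonneg z) hz
  have hprod : ‖conj α * z‖ ≤ r * s := by
    rw [norm_mul, RCLike.norm_conj]
    exact mul_le_mul hα hz (norm_nonneg z) hr0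
  have hdlo : 1 - r * s ≤ ‖1 + conj α * z‖ := by
    have h := norm_sub_norm_le (1 : ℂ) (-(conj α * z))
    simp only [norm_one, norm_neg, sub_neg_eq_add] at h
    linarith
  have hdhi : ‖1 + conj α * z‖ ≤ 1 + r * s := by
    calc ‖1 + conj α * z‖ ≤ ‖(1 : ℂ)‖ + ‖conj α * z‖ := norm_add_le _ _
    _ ≤ 1 + r * s := by rw [norm_one]; linarith
  have hrs1 : r * s < 1 := by nlinarith
  have hdpos : 0 < ‖1 + conj α * z‖ := by linarith
  have hfle1 : (1 - s ^ 2) * (1 - r ^ 2) / (1 + r * s) ^ 2 ≤ 1 := by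
    rw [div_le_one (by positivity)]; nlinarith
  rw [show ((z + α) / (1 + conj α * z)) = (z + α) * (1 + conj α * z)⁻¹ by ring]
  rw [norm_mul, norm_inv]
  rw [Real.le_sqrt (by positivity) (by linarith)]
  have hD : Complex.normSq (1 + conj α * z) = ‖1 + conj α * z‖ ^ 2 := by
    rw [← Complex.sq_norm]
  have hN : Complex.normSq (z + α) = ‖z + α‖ ^ 2 := by
    rw [← Complex.sq_norm]
  have hu : Complex.normSq z = ‖z‖ ^ 2 := by rw [← Complex.sq_norm]
  have hv : Complex.normSq α = ‖α‖ ^ 2 := by rw [← Complex.sq_norm]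
  have key := normSq_key α z
  rw [hD, hN, hu, hv] at key
  have hz2 : ‖z‖ ^ 2 ≤ s ^ 2 := by nlinarith [norm_nonneg z]
  have ha2 : ‖α‖ ^ 2 ≤ r ^ 2 := by nlinarith [norm_nonneg α]
  have hz1 : ‖z‖ ^ 2 < 1 := by nlinarith
  have ha1 : ‖α‖ ^ 2 < 1 := by nlinarith
  have hfrac : (1 - s ^ 2) * (1 - r ^ 2) / (1 + r * s) ^ 2
      ≤ (1 - ‖z‖ ^ 2) * (1 - ‖α‖ ^ 2) / ‖1 + conj α * z‖ ^ 2 := by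
    apply div_le_div₀ (mul_nonneg (by linarith) (by linarith))
      (mul_le_mul (by linarith) (by linarith) (by nlinarith) (by linarith))
      (by positivity) (by nlinarith)
  have hexp : (‖z + α‖ * ‖1 + conj α * z‖⁻¹) ^ 2
      = ‖z + α‖ ^ 2 / ‖1 + conj α * z‖ ^ 2 := by
    rw [mul_pow, inv_pow]; ring
  rw [hexp]
  have hD0 : (0:ℝ) < ‖1 + conj α * z‖ ^ 2 := by positivity
  have : ‖z + α‖ ^ 2 / ‖1 + conj α * z‖ ^ 2
      = 1 - (1 - ‖z‖ ^ 2) * (1 - ‖α‖ ^ 2) / ‖1 + conj α * z‖ ^ 2 := by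
    rw [eq_sub_iff_add_eq, ← add_div, div_eq_one_iff_eq hD0.ne']
    linarith [key]
  rw [this]
  linarith

private lemma mob_inv {α z : ℂ} (hα : ‖α‖ < 1) (hz : ‖z‖ < 1) :
    ((z + α) / (1 + conj α * z) + -α) /
      (1 + conj (-α) * ((z + α) / (1 + conj α * z))) = z := by
  have h1 : (1 : ℂ) + conj α * z ≠ 0 := by
    apply one_add_ne
    rw [norm_mul, RCLike.norm_conj]
    nlinarith [norm_nonneg α, norm_nonneg z]
  have h2 : (1 : ℂ) + -(conj α * α) ≠ 0 := by
    apply one_add_ne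
    rw [norm_neg, norm_mul, RCLike.norm_conj]
    nlinarith [norm_nonneg α]
  have e1 : (z + α) / (1 + conj α * z) + -α
      = z * (1 + -(conj α * α)) / (1 + conj α * z) := by
    rw [div_add' _ _ _ h1]; ring
  have e2 : 1 + conj (-α) * ((z + α) / (1 + conj α * z))
      = (1 + -(conj α * α)) / (1 + conj α * z) := by
    rw [map_neg]; field_simp; ring
  rw [e1, e2, div_div_div_cancel_right₀, mul_div_assoc, div_self h2, mul_one]
  exact h1

noncomputable def mobiusMap {I : Type*} (b : lp (fun _ : I => ℂ) ∞) (hb : ‖b‖ < 1)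
    (f : {f : lp (fun _ : I => ℂ) ∞ // ‖f‖ < 1}) :
    {f : lp (fun _ : I => ℂ) ∞ // ‖f‖ < 1} := by
  refine ⟨⟨fun i => ((f : lp (fun _ : I => ℂ) ∞) i + b i) /
      (1 + conj (b i) * (f : lp (fun _ : I => ℂ) ∞) i), ?_⟩, ?_⟩
  · apply memℓp_infty
    refine ⟨Real.sqrt (1 - (1 - ‖(f : lp (fun _ : I => ℂ) ∞)‖ ^ 2) * (1 - ‖b‖ ^ 2) /
        (1 + ‖b‖ * ‖(f : lp (fun _ : I => ℂ) ∞)‖) ^ 2), ?_⟩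
    rintro _ ⟨i, rfl⟩
    exact mob_bound hb f.2 (lp.norm_apply_le_norm ENNReal.top_ne_zero b i)
      (lp.norm_apply_le_norm ENNReal.top_ne_zero _ i)
  · set s := ‖(f : lp (fun _ : I => ℂ) ∞)‖ with hs
    set r := ‖b‖ with hr
    have hs1 : s < 1 := f.2
    have hr0 : 0 ≤ r := norm_nonneg b
    have hs0 : 0 ≤ s := norm_nonneg _
    have heps : (0:ℝ) < (1 - s ^ 2) * (1 - r ^ 2) / (1 + r * s) ^ 2 :=
      div_pos (mul_pos (by nlinarith) (by nlinarith)) (by positivity)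
    have hC : Real.sqrt (1 - (1 - s ^ 2) * (1 - r ^ 2) / (1 + r * s) ^ 2) < 1 := by
      rw [Real.sqrt_lt' one_pos]
      nlinarith
    refine lt_of_le_of_lt (lp.norm_le_of_forall_le (Real.sqrt_nonneg _) fun i => ?_) hC
    exact mob_bound hb hs1 (lp.norm_apply_le_norm ENNReal.top_ne_zero b i)
      (lp.norm_apply_le_norm ENNReal.top_ne_zero _ i)

lemma mobiusMap_apply {I : Type*} (b : lp (fun _ : I => ℂ) ∞) (hb : ‖b‖ < 1)
    (f : {f : lp (fun _ : I => ℂ) ∞ // ‖f‖ < 1}) (i : I) :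
    (mobiusMap b hb f : lp (fun _ : I => ℂ) ∞) i
      = ((f : lp (fun _ : I => ℂ) ∞) i + b i) /
        (1 + conj (b i) * (f : lp (fun _ : I => ℂ) ∞) i) := rfl

/-- For every `a` in the open unit ball `B` of `ℓ^∞(I)`, the map `φ_a` defined
coordinatewise by `φ_a(f)(i) = (f(i) + a(i)) / (1 + conj(a(i)) f(i))` maps `B`
bijectively onto `B`, with inverse `φ_{-a}`. -/
theorem stmt10 {I : Type*} (a : lp (fun _ : I => ℂ) ∞) (ha : ‖a‖ < 1) :
    ∃ φ ψ : {f : lp (fun _ : I => ℂ) ∞ // ‖f‖ < 1} →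
            {f : lp (fun _ : I => ℂ) ∞ // ‖f‖ < 1},
      (∀ f i, (φ f : lp (fun _ : I => ℂ) ∞) i =
          ((f : lp (fun _ : I => ℂ) ∞) i + a i) /
            (1 + conj (a i) * (f : lp (fun _ : I => ℂ) ∞) i)) ∧
      (∀ f i, (ψ f : lp (fun _ : I => ℂ) ∞) i =
          ((f : lp (fun _ : I => ℂ) ∞) i + (-a) i) /
            (1 + conj ((-a) i) * (f : lp (fun _ : I => ℂ) ∞) i)) ∧
      Function.LeftInverse ψ φ ∧ Function.RightInverse ψ φ := by
  have hna : ‖-a‖ < 1 := by rwa [lp.norm_neg]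
  have hnegi : ∀ i, (-a : lp (fun _ : I => ℂ) ∞) i = -(a i) := by
    intro i; rw [lp.coeFn_neg]; rfl
  have hai : ∀ i, ‖a i‖ < 1 :=
    fun i => lt_of_le_of_lt (lp.norm_apply_le_norm ENNReal.top_ne_zero a i) ha
  refine ⟨mobiusMap a ha, mobiusMap (-a) hna,
    fun f i => mobiusMap_apply a ha f i, fun f i => mobiusMap_apply (-a) hna f i, ?_, ?_⟩
  · intro f
    apply Subtype.ext
    apply lp.ext
    funext i
    have hfi : ‖(f : lp (fun _ : I => ℂ) ∞) i‖ < 1 :=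
      lt_of_le_of_lt (lp.norm_apply_le_norm ENNReal.top_ne_zero _ i) f.2
    rw [mobiusMap_apply, mobiusMap_apply, hnegi i]
    exact mob_inv (hai i) hfi
  · intro f
    apply Subtype.ext
    apply lp.ext
    funext i
    have hfi : ‖(f : lp (fun _ : I => ℂ) ∞) i‖ < 1 :=
      lt_of_le_of_lt (lp.norm_apply_le_norm ENNReal.top_ne_zero _ i) f.2
    rw [mobiusMap_apply, mobiusMap_apply, hnegi i]
    have hnai : ‖-(a i : ℂ)‖ < 1 := by rw [norm_neg]; exact hai i
    have := mob_inv hnai hfi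
    simp only [neg_neg] at this
    exact this
end

section
/- For every a in the open unit ball B of c₀(I), the coordinatewise Möbius map φ_a(f)(i) = (f(i) + a(i)) / (1 + conj(a(i)) f(i)) sends c₀(I)-elements of B into c₀(I), and is a bijection of B onto itself. -/
set_option maxHeartbeats 1000000

open scoped ZeroAtInfty ComplexConjugate
open Filter Complex

namespace Stmt11Aux

variable {I : Type*} [TopologicalSpace I] [DiscreteTopology I]

noncomputable def mob (a f : C₀(I, ℂ)) : C₀(I, ℂ) :=
  ⟨⟨fun i => (f i + a i) / (1 + conj (a i) * f i), continuous_of_discreteTopology⟩, by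
    have hf : Tendsto (fun i => f i) (cocompact I) (nhds 0) := f.zero_at_infty'
    have ha : Tendsto (fun i => a i) (cocompact I) (nhds 0) := a.zero_at_infty'
    have hc : Tendsto (fun i => conj (a i)) (cocompact I) (nhds 0) := by
      simpa [Function.comp_def] using ((Complex.continuous_conj.tendsto 0).comp ha)
    have hden : Tendsto (fun i => 1 + conj (a i) * f i) (cocompact I) (nhds 1) := by
      simpa using tendsto_const_nhds.add (hc.mul hf)
    have h := (hf.add ha).div hden one_ne_zero
    simpa [Pi.div_def] using h⟩

lemma mob_apply (a f : C₀(I, ℂ)) (i : I) :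
    mob a f i = (f i + a i) / (1 + conj (a i) * f i) := rfl

lemma norm_apply_le (f : C₀(I, ℂ)) (i : I) : ‖f i‖ ≤ ‖f‖ := by
  simpa [ZeroAtInftyContinuousMap.norm_toBCF_eq_norm] using f.toBCF.norm_coe_le_norm i

/-- The Möbius identity `‖1+āz‖² - ‖z+α‖² = (1-‖α‖²)(1-‖z‖²)`. -/
lemma key_identity (α z : ℂ) :
    ‖1 + conj α * z‖ ^ 2 - ‖z + α‖ ^ 2 = (1 - ‖α‖ ^ 2) * (1 - ‖z‖ ^ 2) := by
  simp only [Complex.sq_norm, Complex.normSq_apply,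
    Complex.add_re, Complex.add_im, Complex.mul_re, Complex.mul_im,
    Complex.one_re, Complex.one_im, Complex.conj_re, Complex.conj_im]
  ring

lemma denom_pos (a f : C₀(I, ℂ)) (ha : ‖a‖ < 1) (hf : ‖f‖ < 1) (i : I) :
    0 < ‖1 + conj (a i) * f i‖ := by
  have h1 := norm_apply_le a i
  have h2 := norm_apply_le f i
  have := norm_sub_norm_le (1 : ℂ) (-(conj (a i) * f i))
  simp only [sub_neg_eq_add, norm_one, norm_neg, norm_mul, RCLike.norm_conj] at this
  have hprod : ‖a i‖ * ‖f i‖ ≤ ‖a‖ * ‖f‖ :=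
    mul_le_mul h1 h2 (norm_nonneg _) (norm_nonneg a)
  have h4 : ‖a‖ * ‖f‖ < 1 := by nlinarith [norm_nonneg a, norm_nonneg f]
  linarith

lemma denom_ne (a f : C₀(I, ℂ)) (ha : ‖a‖ < 1) (hf : ‖f‖ < 1) (i : I) :
    1 + conj (a i) * f i ≠ 0 := by
  have := denom_pos a f ha hf i
  intro h; rw [h] at this; simp at this

lemma mob_norm_lt (a f : C₀(I, ℂ)) (ha : ‖a‖ < 1) (hf : ‖f‖ < 1) :
    ‖mob a f‖ < 1 := by
  have hna := norm_nonneg a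
  have hnf := norm_nonneg f
  obtain ⟨q, hqdef⟩ : ∃ q : ℝ, q = (1 - ‖a‖ ^ 2) * (1 - ‖f‖ ^ 2) / (1 + ‖a‖ * ‖f‖) ^ 2 :=
    ⟨_, rfl⟩
  have hden0 : (0:ℝ) < (1 + ‖a‖ * ‖f‖) ^ 2 := by positivity
  have hq0 : 0 < q := by
    rw [hqdef]
    apply div_pos _ hden0
    have p1 : (0:ℝ) < 1 - ‖a‖ ^ 2 := by nlinarith
    have p2 : (0:ℝ) < 1 - ‖f‖ ^ 2 := by nlinarith
    exact mul_pos p1 p2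
  have hq : q * (1 + ‖a‖ * ‖f‖) ^ 2 = (1 - ‖a‖ ^ 2) * (1 - ‖f‖ ^ 2) := by
    rw [hqdef]; field_simp
  obtain ⟨s, hsdef⟩ : ∃ s : ℝ, s = 1 - q := ⟨_, rfl⟩
  have hs1 : s < 1 := by rw [hsdef]; linarith
  have hq1 : q ≤ 1 := by rw [hqdef, div_le_one hden0]; nlinarith
  have hs0 : 0 ≤ s := by rw [hsdef]; linarith
  have hrlt : Real.sqrt s < 1 := by
    nlinarith [Real.sq_sqrt hs0, Real.sqrt_nonneg s]
  refine lt_of_le_of_lt ?_ hrlt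
  rw [← ZeroAtInftyContinuousMap.norm_toBCF_eq_norm,
    BoundedContinuousFunction.norm_le (Real.sqrt_nonneg s)]
  intro i
  have h1 := norm_apply_le a i
  have h2 := norm_apply_le f i
  have hA0 := norm_nonneg (a i)
  have hZ0 := norm_nonneg (f i)
  have hD := denom_pos a f ha hf i
  have hDle : ‖1 + conj (a i) * f i‖ ≤ 1 + ‖a‖ * ‖f‖ := by
    have := norm_add_le (1 : ℂ) (conj (a i) * f i)
    rw [norm_one, norm_mul, RCLike.norm_conj] at this
    nlinarith
  have key := key_identity (a i) (f i)
  show ‖(f i + a i) / (1 + conj (a i) * f i)‖ ≤ Real.sqrt s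
  rw [norm_div]
  have hsq : (‖f i + a i‖ / ‖1 + conj (a i) * f i‖) ^ 2 ≤ s := by
    rw [div_pow, div_le_iff₀ (by positivity)]
    have hqD : q * ‖1 + conj (a i) * f i‖ ^ 2 ≤ (1 - ‖a i‖ ^ 2) * (1 - ‖f i‖ ^ 2) := by
      have h3 : q * ‖1 + conj (a i) * f i‖ ^ 2 ≤ q * (1 + ‖a‖ * ‖f‖) ^ 2 := by
        apply mul_le_mul_of_nonneg_left _ hq0.le
        nlinarith
      rw [hq] at h3
      have p1 : (1:ℝ) - ‖a‖ ^ 2 ≤ 1 - ‖a i‖ ^ 2 := by nlinarith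
      have p2 : (1:ℝ) - ‖f‖ ^ 2 ≤ 1 - ‖f i‖ ^ 2 := by nlinarith
      have p3 : (0:ℝ) ≤ 1 - ‖f‖ ^ 2 := by nlinarith
      have p4 : (0:ℝ) ≤ 1 - ‖a i‖ ^ 2 := by nlinarith
      calc q * ‖1 + conj (a i) * f i‖ ^ 2 ≤ (1 - ‖a‖ ^ 2) * (1 - ‖f‖ ^ 2) := h3
        _ ≤ (1 - ‖a i‖ ^ 2) * (1 - ‖f i‖ ^ 2) := mul_le_mul p1 p2 p3 p4
    nlinarith
  nlinarith [Real.sq_sqrt hs0, Real.sqrt_nonneg s, norm_nonneg (f i + a i),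
    div_nonneg (norm_nonneg (f i + a i)) hD.le]

lemma mob_inv (a f : C₀(I, ℂ)) (ha : ‖a‖ < 1) (hf : ‖f‖ < 1) :
    mob (-a) (mob a f) = f := by
  ext i
  have hd1 := denom_ne a f ha hf i
  have hc : (1 : ℂ) - conj (a i) * a i ≠ 0 := by
    intro h
    have h' : (1 : ℂ) = conj (a i) * a i := by linear_combination h
    have := congrArg norm h'
    rw [norm_one, norm_mul, RCLike.norm_conj] at this
    have h1 := norm_apply_le a i
    nlinarith [norm_nonneg (a i)]
  rw [mob_apply, mob_apply]
  simp only [ZeroAtInftyContinuousMap.coe_neg, Pi.neg_apply, map_neg]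
  have e1 : (f i + a i) / (1 + conj (a i) * f i) + -(a i)
      = f i * (1 - conj (a i) * a i) / (1 + conj (a i) * f i) := by
    rw [div_add' _ _ _ hd1]; ring
  have e2 : 1 + -(conj (a i)) * ((f i + a i) / (1 + conj (a i) * f i))
      = (1 - conj (a i) * a i) / (1 + conj (a i) * f i) := by
    field_simp; ring
  have hcd : (1 - conj (a i) * a i) / (1 + conj (a i) * f i) ≠ 0 := div_ne_zero hc hd1
  rw [e1, e2, mul_div_assoc]
  exact mul_div_cancel_right₀ _ hcd

end Stmt11Aux

/-- For every `a` in the open unit ball `B` of `c₀(I)`, the coordinatewise Möbius map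
`φ_a(f)(i) = (f(i) + a(i)) / (1 + conj(a(i)) f(i))` sends `c₀(I)`-elements of `B` into
`c₀(I)`, and is a bijection of `B` onto itself (with inverse `φ_{-a}`). -/
theorem stmt11 {I : Type*} [TopologicalSpace I] [DiscreteTopology I]
    (a : C₀(I, ℂ)) (ha : ‖a‖ < 1) :
    ∃ φ ψ : {f : C₀(I, ℂ) // ‖f‖ < 1} → {f : C₀(I, ℂ) // ‖f‖ < 1},
      (∀ f i, (φ f : C₀(I, ℂ)) i =
          ((f : C₀(I, ℂ)) i + a i) / (1 + conj (a i) * (f : C₀(I, ℂ)) i)) ∧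
      (∀ f i, (ψ f : C₀(I, ℂ)) i =
          ((f : C₀(I, ℂ)) i - a i) / (1 + conj (-a i) * (f : C₀(I, ℂ)) i)) ∧
      Function.LeftInverse ψ φ ∧ Function.RightInverse ψ φ := by
  have hna : ‖-a‖ < 1 := by rwa [norm_neg]
  refine ⟨fun f => ⟨Stmt11Aux.mob a f, Stmt11Aux.mob_norm_lt a f ha f.2⟩,
    fun f => ⟨Stmt11Aux.mob (-a) f, Stmt11Aux.mob_norm_lt (-a) f hna f.2⟩, ?_, ?_, ?_, ?_⟩
  · intro f i; rw [Stmt11Aux.mob_apply]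
  · intro f i
    rw [Stmt11Aux.mob_apply]
    simp [sub_eq_add_neg]
  · intro f
    ext1
    exact Stmt11Aux.mob_inv a f ha f.2
  · intro f
    ext1
    have := Stmt11Aux.mob_inv (-a) f hna f.2
    simpa using this
end

section
/- (Cartan uniqueness application) Let B be the open unit ball of a complex Banach space E, and let φ : B → B be holomorphic with φ(0) = 0 and φ'(0) = id_E. Then φ = id_B. -/
open Metric Asymptotics Filter Topology

section Aux
variable {E : Type*} [NormedAddCommGroup E] [NormedSpace ℂ E]

lemma aux_pow_O {F : Type*} [NormedAddCommGroup F] {j k : ℕ} (h : j ≤ k) :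
    (fun w : F => ‖w‖ ^ k) =O[𝓝 0] fun w => ‖w‖ ^ j := by
  rw [isBigO_iff]
  refine ⟨1, ?_⟩
  filter_upwards [Metric.ball_mem_nhds (0 : F) one_pos] with w hw
  rw [mem_ball_zero_iff] at hw
  have h1 : ‖w‖ ≤ 1 := hw.le
  have := pow_le_pow_of_le_one (norm_nonneg w) h1 h
  simpa [abs_of_nonneg (pow_nonneg (norm_nonneg w) _)] using this

lemma aux_pow_o {F : Type*} [NormedAddCommGroup F] {j k : ℕ} (h : j < k) :
    (fun w : F => ‖w‖ ^ k) =o[𝓝 0] fun w => ‖w‖ ^ j := by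
  rw [isLittleO_iff]
  intro c hc
  filter_upwards [Metric.ball_mem_nhds (0 : F) (lt_min hc one_pos)] with w hw
  rw [mem_ball_zero_iff] at hw
  have h1 : ‖w‖ ≤ 1 := le_of_lt (lt_of_lt_of_le hw (min_le_right _ _))
  have h2 : ‖w‖ ^ k ≤ ‖w‖ ^ (j + 1) := pow_le_pow_of_le_one (norm_nonneg w) h1 h
  have h3 : ‖w‖ ^ (j + 1) = ‖w‖ * ‖w‖ ^ j := by ring
  have h4 : ‖w‖ * ‖w‖ ^ j ≤ c * ‖w‖ ^ j := by
    apply mul_le_mul_of_nonneg_right _ (pow_nonneg (norm_nonneg w) _)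
    exact le_of_lt (lt_of_lt_of_le hw (min_le_left _ _))
  calc ‖‖w‖ ^ k‖ = ‖w‖ ^ k := by rw [Real.norm_eq_abs, abs_of_nonneg (pow_nonneg (norm_nonneg w) _)]
    _ ≤ c * ‖w‖ ^ j := by linarith
    _ ≤ c * ‖‖w‖ ^ j‖ := by rw [Real.norm_eq_abs, abs_of_nonneg (pow_nonneg (norm_nonneg w) _)]

lemma aux_smul_zero {k : ℕ} {a : E}
    (h : (fun t : ℂ => t ^ k • a) =o[𝓝 0] fun t : ℂ => ‖t‖ ^ k) : a = 0 := by
  rw [← norm_le_zero_iff]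
  refine le_of_forall_pos_le_add fun ε hε => ?_
  obtain ⟨δ, hδ, hb⟩ := Metric.eventually_nhds_iff.mp (isLittleO_iff.mp h hε)
  set t : ℂ := ((δ / 2 : ℝ) : ℂ)
  have ht0 : t ≠ 0 := by
    simp only [t, Ne, Complex.ofReal_eq_zero]
    positivity
  have htδ : dist t 0 < δ := by
    simp only [t, dist_zero_right, Complex.norm_real, Real.norm_eq_abs,
      abs_of_pos (by positivity : (0:ℝ) < δ / 2)]
    linarith
  have := hb htδ
  rw [norm_smul, norm_pow] at this
  have hpos : 0 < ‖t‖ ^ k := pow_pos (norm_pos_iff.mpr ht0) k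
  have : ‖a‖ ≤ ε := by
    have h2 : ‖t‖ ^ k * ‖a‖ ≤ ε * ‖t‖ ^ k := by
      simpa [abs_of_nonneg hpos.le] using this
    nlinarith
  linarith
end Aux

section Aux2
variable {E : Type*} [NormedAddCommGroup E] [NormedSpace ℂ E]

/-- The formal power series of the monomial `t ↦ t ^ k • v`. -/
noncomputable def monSeries (k : ℕ) (v : E) : FormalMultilinearSeries ℂ ℂ E :=
  fun n => if n = k then ContinuousMultilinearMap.mkPiRing ℂ (Fin n) v else 0

lemma monSeries_apply (k : ℕ) (v : E) (n : ℕ) (t : ℂ) :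
    (monSeries k v n fun _ => t) = if n = k then t ^ n • v else 0 := by
  unfold monSeries
  split_ifs with h
  · simp [ContinuousMultilinearMap.mkPiRing_apply, Finset.prod_const]
  · simp

lemma monSeries_coeff (k : ℕ) (v : E) (n : ℕ) :
    (monSeries k v).coeff n = if n = k then v else 0 := by
  have h := monSeries_apply k v n 1
  rw [one_pow, one_smul] at h
  exact h

lemma monSeries_hasFPS (k : ℕ) (v : E) :
    HasFPowerSeriesAt (fun t : ℂ => t ^ k • v) (monSeries k v) 0 := by
  refine ⟨1, ?_, one_pos, ?_⟩
  · apply FormalMultilinearSeries.le_radius_of_bound _ ‖v‖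
    intro n
    unfold monSeries
    split_ifs with h
    · simp [ContinuousMultilinearMap.norm_mkPiRing]
    · simp
  · intro y _
    have hfun : (fun n => (monSeries k v n fun _ => y)) =
        fun n => if n = k then y ^ k • v else 0 := by
      funext n
      rw [monSeries_apply]
      by_cases h : n = k
      · rw [if_pos h, if_pos h, h]
      · rw [if_neg h, if_neg h]
    rw [hfun, zero_add]
    exact hasSum_ite_eq k (y ^ k • v)

lemma coeff_zero_of_littleO {g : ℂ → E} {q : FormalMultilinearSeries ℂ ℂ E}
    (hg : HasFPowerSeriesAt g q 0) {k : ℕ}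
    (h : g =o[𝓝 0] fun t : ℂ => ‖t‖ ^ k) : ∀ j ≤ k, q.coeff j = 0 := by
  intro j
  induction j using Nat.strong_induction_on with
  | _ j IH =>
    intro hj
    have hps : ∀ t : ℂ, q.partialSum (j + 1) t = t ^ j • q.coeff j := by
      intro t
      unfold FormalMultilinearSeries.partialSum
      rw [Finset.sum_eq_single j]
      · exact q.apply_eq_pow_smul_coeff
      · intro i hi hij
        have hilt : i < j := lt_of_le_of_ne (Finset.mem_range_succ_iff.mp hi) hij
        rw [q.apply_eq_pow_smul_coeff, IH i hilt (hilt.le.trans hj), smul_zero]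
      · intro hin
        exact absurd (Finset.self_mem_range_succ j) hin
    have h1 : (fun t : ℂ => g t - t ^ j • q.coeff j) =O[𝓝 0] fun t => ‖t‖ ^ (j + 1) := by
      have := hg.isBigO_sub_partialSum_pow (j + 1)
      simp only [zero_add] at this
      refine this.congr' (Eventually.of_forall fun t => ?_) EventuallyEq.rfl
      simp only [hps]
    have h2 : (fun t : ℂ => t ^ j • q.coeff j) =o[𝓝 0] fun t => ‖t‖ ^ j := by
      have hg' : g =o[𝓝 0] fun t : ℂ => ‖t‖ ^ j := h.trans_isBigO (aux_pow_O hj)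
      have h3 : (fun t : ℂ => g t - t ^ j • q.coeff j) =o[𝓝 0] fun t => ‖t‖ ^ j :=
        h1.trans_isLittleO (aux_pow_o (lt_add_one j))
      have := hg'.sub h3
      refine this.congr' (Eventually.of_forall fun t => ?_) EventuallyEq.rfl
      simp
    exact aux_smul_zero h2
end Aux2
/-- Cartan's uniqueness theorem: if `B` is the open unit ball of a complex Banach space
`E` and `φ : B → B` is holomorphic with `φ(0) = 0` and `φ'(0) = id`, then `φ = id` on
`B`. -/
theorem stmt14 {E : Type*} [NormedAddCommGroup E] [NormedSpace ℂ E] [CompleteSpace E]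
    (φ : E → E) (hφ : AnalyticOnNhd ℂ φ (ball 0 1))
    (hmap : Set.MapsTo φ (ball 0 1) (ball 0 1)) (h0 : φ 0 = 0)
    (hd : fderiv ℂ φ 0 = ContinuousLinearMap.id ℂ E) :
    Set.EqOn φ id (ball 0 1) := by
  have h01 : (0 : E) ∈ ball (0 : E) 1 := mem_ball_self one_pos
  obtain ⟨p, hp⟩ := hφ 0 h01
  have hiter : ∀ n, AnalyticOnNhd ℂ (φ^[n]) (ball (0:E) 1) := by
    intro n
    induction n with
    | zero => exact analyticOnNhd_id
    | succ n ih =>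
      rw [Function.iterate_succ']
      exact hφ.comp ih (hmap.iterate n)
  have hmapn : ∀ n, Set.MapsTo (φ^[n]) (ball (0:E) 1) (ball (0:E) 1) := fun n => hmap.iterate n
  have hfix : ∀ n, φ^[n] 0 = 0 := fun n => Function.iterate_fixed h0 n
  have hp1 : ∀ y : E, (p 1 fun _ => y) = y := by
    intro y
    have h1 := hp.fderiv_eq
    rw [hd] at h1
    have h2 : (continuousMultilinearCurryFin1 ℂ E E (p 1)) y = y := by rw [← h1]; rfl
    rw [continuousMultilinearCurryFin1_apply] at h2
    have h3 : (fun _ : Fin 1 => y) = Fin.snoc (0 : Fin 0 → E) y := by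
      funext i
      simp [Fin.snoc]
    rw [h3]
    exact h2
  have hp0 : ∀ v : Fin 0 → E, p 0 v = 0 := by
    intro v
    rw [hp.coeff_zero v, h0]
  -- main claim: all coefficients of degree ≥ 2 vanish on the diagonal
  have key : ∀ k, 2 ≤ k → ∀ y : E, (p k fun _ => y) = 0 := by
    intro k
    induction k using Nat.strong_induction_on with
    | _ k IH =>
      intro hk2
      set P : E → E := fun w => p k fun _ => w with hPdef
      have hps : ∀ y : E, p.partialSum (k + 1) y = y + P y := by
        intro y
        unfold FormalMultilinearSeries.partialSum
        have hterm : ∀ i ∈ Finset.range (k + 1),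
            (p i fun _ => y) = (if i = 1 then y else 0) + (if i = k then P y else 0) := by
          intro i hi
          rw [Finset.mem_range] at hi
          match i with
          | 0 =>
            rw [hp0 _, if_neg (by omega), if_neg (by omega), add_zero]
          | 1 =>
            rw [hp1 y, if_pos rfl, if_neg (by omega), add_zero]
          | (m + 2) =>
            by_cases hik : m + 2 = k
            · rw [if_neg (by omega), if_pos hik, zero_add, hik]
            · rw [IH (m + 2) (by omega) (by omega) y, if_neg (by omega), if_neg hik, add_zero]
        rw [Finset.sum_congr rfl hterm, Finset.sum_add_distrib,
          Finset.sum_ite_eq' (Finset.range (k + 1)) 1 (fun _ => y),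
          Finset.sum_ite_eq' (Finset.range (k + 1)) k (fun _ => P y),
          if_pos (by simp; omega), if_pos (Finset.self_mem_range_succ k)]
      have hPbound : P =O[𝓝 (0:E)] fun w => ‖w‖ ^ k := by
        rw [isBigO_iff]
        refine ⟨‖p k‖, Eventually.of_forall fun w => ?_⟩
        calc ‖P w‖ ≤ ‖p k‖ * ∏ _i : Fin k, ‖w‖ := (p k).le_opNorm _
          _ = ‖p k‖ * ‖w‖ ^ k := by rw [Finset.prod_const, Finset.card_fin]
          _ ≤ ‖p k‖ * ‖‖w‖ ^ k‖ := by
              rw [Real.norm_eq_abs, abs_of_nonneg (pow_nonneg (norm_nonneg w) _)]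
      have hA1 : (fun w => φ w - w - P w) =o[𝓝 (0:E)] fun w => ‖w‖ ^ k := by
        have hO := hp.isBigO_sub_partialSum_pow (k + 1)
        simp only [zero_add] at hO
        have h2 : (fun w => φ w - w - P w) =O[𝓝 (0:E)] fun w => ‖w‖ ^ (k + 1) := by
          refine hO.congr' (Eventually.of_forall fun w => ?_) EventuallyEq.rfl
          show φ w - p.partialSum (k + 1) w = φ w - w - P w
          rw [hps w, sub_add_eq_sub_sub]
        exact h2.trans_isLittleO (aux_pow_o (lt_add_one k))
      have hA : ∀ n : ℕ, (fun w => φ^[n] w - w - (n : ℂ) • P w) =o[𝓝 (0:E)] fun w => ‖w‖ ^ k := by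
        intro n
        induction n with
        | zero =>
          have : (fun w : E => φ^[0] w - w - ((0 : ℕ) : ℂ) • P w) = fun _ => (0 : E) := by
            funext w; simp
          rw [this]
          exact isLittleO_zero _ _
        | succ n ihn =>
          set u : E → E := φ^[n] with hu
          have huO : (fun w => u w - w) =O[𝓝 (0:E)] fun w => ‖w‖ ^ k := by
            have := ihn.isBigO.add (hPbound.const_smul_left (n : ℂ))
            refine this.congr' (Eventually.of_forall fun w => ?_) (by
              refine Eventually.of_forall fun w => ?_
              simp)
            simp
          have hu2 : ∀ᶠ w in 𝓝 (0:E), ‖u w‖ ≤ 2 * ‖w‖ := by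
            have h1 : (fun w => u w - w) =o[𝓝 (0:E)] fun w => ‖w‖ := by
              have := huO.trans_isLittleO (aux_pow_o (show 1 < k by omega))
              refine this.congr' EventuallyEq.rfl (Eventually.of_forall fun w => ?_)
              show ‖w‖ ^ 1 = ‖w‖
              rw [pow_one]
            filter_upwards [isLittleO_iff.mp h1 one_pos] with w hw
            calc ‖u w‖ = ‖(u w - w) + w‖ := by rw [sub_add_cancel]
              _ ≤ ‖u w - w‖ + ‖w‖ := norm_add_le _ _
              _ ≤ ‖w‖ + ‖w‖ := by
                  have : ‖u w - w‖ ≤ 1 * ‖‖w‖‖ := hw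
                  simp only [one_mul, norm_norm] at this
                  linarith
              _ = 2 * ‖w‖ := by ring
          have hut : Filter.Tendsto u (𝓝 (0:E)) (𝓝 (0:E)) := by
            have := ((hiter n) 0 h01).continuousAt.tendsto
            rwa [hfix n] at this
          have t1 : (fun w => φ (u w) - u w - P (u w)) =o[𝓝 (0:E)] fun w => ‖w‖ ^ k := by
            have hcomp := hA1.comp_tendsto hut
            refine hcomp.trans_isBigO ?_
            rw [isBigO_iff]
            refine ⟨2 ^ k, ?_⟩
            filter_upwards [hu2] with w hw
            calc ‖‖u w‖ ^ k‖ = ‖u w‖ ^ k := by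
                  rw [Real.norm_eq_abs, abs_of_nonneg (pow_nonneg (norm_nonneg _) _)]
              _ ≤ (2 * ‖w‖) ^ k := pow_le_pow_left₀ (norm_nonneg _) hw k
              _ = 2 ^ k * ‖w‖ ^ k := by rw [mul_pow]
              _ ≤ 2 ^ k * ‖‖w‖ ^ k‖ := by
                  rw [Real.norm_eq_abs, abs_of_nonneg (pow_nonneg (norm_nonneg _) _)]
          have t2 : (fun w => P (u w) - P w) =o[𝓝 (0:E)] fun w => ‖w‖ ^ k := by
            have s1 : (fun w => P (u w) - P w) =O[𝓝 (0:E)]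
                fun w => ‖w‖ ^ (k - 1) * ‖u w - w‖ := by
              rw [isBigO_iff]
              refine ⟨‖p k‖ * k * 2 ^ (k - 1), ?_⟩
              filter_upwards [hu2] with w hw
              have hd1 : ‖P (u w) - P w‖ ≤
                  ‖p k‖ * (Fintype.card (Fin k)) *
                    max ‖(fun _ : Fin k => u w)‖ ‖(fun _ : Fin k => w)‖ ^ (Fintype.card (Fin k) - 1) *
                    ‖(fun _ : Fin k => u w) - (fun _ : Fin k => w)‖ :=
                (p k).norm_image_sub_le _ _
              have hne : Nonempty (Fin k) := ⟨⟨0, by omega⟩⟩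
              rw [Fintype.card_fin] at hd1
              have e1 : ‖(fun _ : Fin k => u w)‖ = ‖u w‖ := pi_norm_const _
              have e2 : ‖(fun _ : Fin k => w)‖ = ‖w‖ := pi_norm_const _
              have e3 : ‖(fun _ : Fin k => u w) - (fun _ : Fin k => w)‖ = ‖u w - w‖ := by
                have : (fun _ : Fin k => u w) - (fun _ : Fin k => w) = fun _ : Fin k => u w - w := rfl
                rw [this, pi_norm_const]
              rw [e1, e2, e3] at hd1
              have hmax : max ‖u w‖ ‖w‖ ≤ 2 * ‖w‖ := by
                apply max_le hw
                nlinarith [norm_nonneg w]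
              calc ‖P (u w) - P w‖
                  ≤ ‖p k‖ * k * max ‖u w‖ ‖w‖ ^ (k - 1) * ‖u w - w‖ := hd1
                _ ≤ ‖p k‖ * k * (2 * ‖w‖) ^ (k - 1) * ‖u w - w‖ := by
                    have hk1 : (0:ℝ) ≤ max ‖u w‖ ‖w‖ := le_max_of_le_right (norm_nonneg w)
                    have := pow_le_pow_left₀ hk1 hmax (k - 1)
                    have hnn : (0:ℝ) ≤ ‖p k‖ * k := by positivity
                    nlinarith [norm_nonneg (u w - w), mul_le_mul_of_nonneg_left this hnn]
                _ = ‖p k‖ * k * 2 ^ (k - 1) * (‖w‖ ^ (k - 1) * ‖u w - w‖) := by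
                    rw [mul_pow]; ring
                _ ≤ ‖p k‖ * k * 2 ^ (k - 1) * ‖‖w‖ ^ (k - 1) * ‖u w - w‖‖ := by
                    rw [Real.norm_eq_abs, abs_of_nonneg (by positivity)]
            have s2 : (fun w : E => ‖w‖ ^ (k - 1) * ‖u w - w‖) =O[𝓝 (0:E)]
                fun w => ‖w‖ ^ (k - 1 + k) := by
              have := (isBigO_refl (fun w : E => ‖w‖ ^ (k - 1)) (𝓝 0)).mul huO.norm_left
              refine this.congr' EventuallyEq.rfl (Eventually.of_forall fun w => ?_)
              show ‖w‖ ^ (k - 1) * ‖w‖ ^ k = ‖w‖ ^ (k - 1 + k)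
              rw [pow_add]
            exact (s1.trans s2).trans_isLittleO (aux_pow_o (by omega))
          have hsum := (t1.add t2).add ihn
          refine hsum.congr' (Eventually.of_forall fun w => ?_) EventuallyEq.rfl
          show φ (u w) - u w - P (u w) + (P (u w) - P w) + (u w - w - (n : ℂ) • P w) =
            φ^[n + 1] w - w - ((n + 1 : ℕ) : ℂ) • P w
          rw [Function.iterate_succ_apply', ← hu]
          push_cast
          rw [add_smul, one_smul]
          abel
      have hPsmul : ∀ (c : ℂ) (w : E), P (c • w) = c ^ k • P w := by
        intro c w
        show (p k fun _ => c • w) = c ^ k • P w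
        have := (p k).map_smul_univ (fun _ : Fin k => c) (fun _ : Fin k => w)
        simpa [Finset.prod_const, Finset.card_fin] using this
      have hbound : ∀ (n : ℕ) (z : E), z ∈ ball (0:E) 1 → ‖(n : ℂ) • P z‖ ≤ 1 := by
        intro n z hz
        rw [mem_ball_zero_iff] at hz
        set v : E := (n : ℂ) • P z with hv
        set h : ℂ → E := fun t => φ^[n] (t • z) with hh
        have hmem : ∀ t : ℂ, ‖t‖ ≤ 1 → t • z ∈ ball (0:E) 1 := by
          intro t ht
          rw [mem_ball_zero_iff, norm_smul]
          calc ‖t‖ * ‖z‖ ≤ 1 * ‖z‖ := mul_le_mul_of_nonneg_right ht (norm_nonneg z)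
            _ = ‖z‖ := one_mul _
            _ < 1 := hz
        have hdiff : DifferentiableOn ℂ h (closedBall (0:ℂ) 1) := by
          intro t ht
          rw [mem_closedBall_zero_iff] at ht
          have h1 : DifferentiableAt ℂ (φ^[n]) (t • z) :=
            ((hiter n) _ (hmem t ht)).differentiableAt
          have h2 : DifferentiableAt ℂ (fun s : ℂ => s • z) t :=
            differentiableAt_id.smul_const z
          exact (h1.comp t h2).differentiableWithinAt
        have hq := hdiff.hasFPowerSeriesOnBall (R := 1) one_pos
        simp only [NNReal.coe_one] at hq
        have hsz : Filter.Tendsto (fun t : ℂ => t • z) (𝓝 0) (𝓝 (0:E)) := by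
          have hc : Continuous fun t : ℂ => t • z := continuous_id.smul continuous_const
          have h3 := hc.tendsto 0
          simpa using h3
        have hcomp := (hA n).comp_tendsto hsz
        have hgo : (fun t : ℂ => h t - (t ^ 1 • z + t ^ k • v)) =o[𝓝 (0:ℂ)] fun t => ‖t‖ ^ k := by
          have h4 : (fun t : ℂ => h t - (t ^ 1 • z + t ^ k • v)) =o[𝓝 (0:ℂ)]
              fun t => ‖t • z‖ ^ k := by
            refine hcomp.congr' (Eventually.of_forall fun t => ?_) EventuallyEq.rfl
            show φ^[n] (t • z) - t • z - (n : ℂ) • P (t • z) =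
              h t - (t ^ 1 • z + t ^ k • v)
            rw [hPsmul t z, smul_comm ((n : ℂ)) (t ^ k), pow_one, sub_add_eq_sub_sub]
          refine h4.trans_isBigO ?_
          rw [isBigO_iff]
          refine ⟨‖z‖ ^ k, Eventually.of_forall fun t => ?_⟩
          rw [norm_smul]
          rw [Real.norm_eq_abs, Real.norm_eq_abs, abs_of_nonneg (by positivity),
            abs_of_nonneg (by positivity), mul_pow]
          ring_nf
          exact le_refl _
        have hfq := hq.hasFPowerSeriesAt
        have hmon := (monSeries_hasFPS 1 z).add (monSeries_hasFPS k v)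
        have hdiffser := hfq.sub hmon
        have hc0 := coeff_zero_of_littleO hdiffser hgo k le_rfl
        have hqk : (cauchyPowerSeries h 0 1).coeff k = v := by
          have e0 : (cauchyPowerSeries h 0 1 - (monSeries 1 z + monSeries k v)) k
              = cauchyPowerSeries h 0 1 k - (monSeries 1 z k + monSeries k v k) := rfl
          have e1 : (cauchyPowerSeries h 0 1 - (monSeries 1 z + monSeries k v)).coeff k
              = (cauchyPowerSeries h 0 1).coeff k -
                ((monSeries 1 z).coeff k + (monSeries k v).coeff k) := by
            show ((cauchyPowerSeries h 0 1 - (monSeries 1 z + monSeries k v)) k fun _ => 1) = _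
            rw [e0]
            rfl
          rw [e1, monSeries_coeff, monSeries_coeff, if_neg (by omega), if_pos rfl,
            zero_add, sub_eq_zero] at hc0
          exact hc0
        have hint : (∫ θ : ℝ in (0:ℝ)..2 * Real.pi, ‖h (circleMap 0 1 θ)‖) ≤ 2 * Real.pi := by
          have hcont : Continuous fun θ : ℝ => ‖h (circleMap 0 1 θ)‖ := by
            apply Continuous.norm
            rw [continuous_iff_continuousAt]
            intro θ
            have hmem2 : (circleMap 0 1 θ) • z ∈ ball (0:E) 1 := by
              apply hmem
              rw [norm_circleMap_zero]
              norm_num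
            have hin : ContinuousAt (fun θ : ℝ => circleMap 0 1 θ • z) θ :=
              ((continuous_circleMap 0 1).smul continuous_const).continuousAt
            have hout : ContinuousAt (φ^[n]) ((circleMap 0 1 θ) • z) :=
              ((hiter n) _ hmem2).differentiableAt.continuousAt
            show ContinuousAt ((φ^[n]) ∘ fun θ : ℝ => circleMap 0 1 θ • z) θ
            exact ContinuousAt.comp (f := fun θ : ℝ => circleMap 0 1 θ • z) hout hin
          have hpt : ∀ θ ∈ Set.uIcc (0:ℝ) (2 * Real.pi), ‖h (circleMap 0 1 θ)‖ ≤ 1 := by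
            intro θ _
            have hmem2 : (circleMap 0 1 θ) • z ∈ ball (0:E) 1 := by
              apply hmem
              rw [norm_circleMap_zero]
              norm_num
            have := hmapn n hmem2
            rw [mem_ball_zero_iff] at this
            exact this.le
          calc (∫ θ : ℝ in (0:ℝ)..2 * Real.pi, ‖h (circleMap 0 1 θ)‖)
              ≤ ∫ _ : ℝ in (0:ℝ)..2 * Real.pi, (1:ℝ) := by
                apply intervalIntegral.integral_mono_on
                  (by positivity) (hcont.intervalIntegrable 0 (2 * Real.pi))
                  intervalIntegrable_const
                intro θ hθ
                exact hpt θ (by rwa [Set.uIcc_of_le (by positivity)])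
            _ = 2 * Real.pi := by simp
        have hnv : ‖v‖ ≤ 1 := by
          rw [← hqk]
          have hle := norm_cauchyPowerSeries_le h 0 1 k
          have hcoe : ‖(cauchyPowerSeries h 0 1).coeff k‖ = ‖cauchyPowerSeries h 0 1 k‖ :=
            FormalMultilinearSeries.norm_apply_eq_norm_coef.symm
          rw [hcoe]
          calc ‖cauchyPowerSeries h 0 1 k‖
              ≤ ((2 * Real.pi)⁻¹ * ∫ θ : ℝ in (0:ℝ)..2 * Real.pi, ‖h (circleMap 0 1 θ)‖) *
                |(1:ℝ)|⁻¹ ^ k := hle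
            _ ≤ ((2 * Real.pi)⁻¹ * (2 * Real.pi)) * 1 := by
                rw [abs_one, inv_one, one_pow]
                have h2pi : (0:ℝ) < 2 * Real.pi := by positivity
                have := mul_le_mul_of_nonneg_left hint (le_of_lt (inv_pos.mpr h2pi))
                linarith
            _ = 1 := by
                rw [mul_one, inv_mul_cancel₀ (by positivity : (2 * Real.pi) ≠ 0)]
        exact hnv
      have hPball : ∀ z ∈ ball (0:E) 1, P z = 0 := by
        intro z hz
        by_contra hne
        have hpos : 0 < ‖P z‖ := norm_pos_iff.mpr hne
        obtain ⟨n, hn⟩ := exists_nat_gt (1 / ‖P z‖)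
        have h5 := hbound n z hz
        rw [norm_smul, Complex.norm_natCast] at h5
        rw [div_lt_iff₀ hpos] at hn
        linarith
      intro y
      rcases eq_or_ne y 0 with rfl | hy
      · have := hPball 0 h01
        simpa using this
      · set c : ℂ := ((1 / (2 * ‖y‖) : ℝ) : ℂ) with hcdef
        have hyn : (0:ℝ) < ‖y‖ := norm_pos_iff.mpr hy
        have hc0 : c ≠ 0 := by
          rw [hcdef]
          simp only [Ne, Complex.ofReal_eq_zero]
          positivity
        have hcm : c • y ∈ ball (0:E) 1 := by
          rw [mem_ball_zero_iff, norm_smul, hcdef, Complex.norm_real, Real.norm_eq_abs,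
            abs_of_pos (by positivity)]
          rw [div_mul_eq_mul_div, one_mul, div_lt_one (by positivity)]
          linarith
        have h6 := hPball (c • y) hcm
        rw [hPsmul c y] at h6
        rcases smul_eq_zero.mp h6 with h8 | h8
        · exact absurd h8 (pow_ne_zero k hc0)
        · exact h8

  obtain ⟨r, hr⟩ := hp
  have heq : ∀ᶠ y in 𝓝 (0:E), φ y = y := by
    filter_upwards [EMetric.ball_mem_nhds (0:E) hr.r_pos] with y hy
    have hsum := hr.hasSum hy
    rw [zero_add] at hsum
    have hfun : (fun j => p j fun _ => y) = fun j => if j = 1 then y else 0 := by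
      funext j
      match j with
      | 0 => rw [hp0 fun _ => y, if_neg (by omega)]
      | 1 => rw [hp1 y, if_pos rfl]
      | (m + 2) => rw [key (m + 2) (by omega) y, if_neg (by omega)]
    rw [hfun] at hsum
    exact hsum.unique (hasSum_ite_eq 1 y)
  exact hφ.eqOn_of_preconnected_of_eventuallyEq analyticOnNhd_id
    (convex_ball (0:E) 1).isPreconnected h01 heq
end

section
/- Under the hypotheses of Theorem 1 (f : B₁ → B₂ holomorphic, f(0)=0, f'(0) an isometry, π a norm-1 projection onto f'(0)(E₁)), the map r : B₂ → B₂ defined by r(z) = π(z) + ψ(π(z)), where ψ(y) = (id − π)(f((f'(0))⁻¹ y)), is a holomorphic retraction of B₂ onto f(B₁): r maps B₂ into f(B₁), and r(w) = w for all w ∈ f(B₁). -/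
open Metric

/-- Under the hypotheses of Theorem 1, the map `r(z) = π(z) + ψ(π(z))`, where
`ψ(y) = (id − π)(f((f'(0))⁻¹ y))` and `g = (f'(0))⁻¹` inverts the isometry `f'(0)` on its
range, is a holomorphic retraction of `B₂` onto `f(B₁)`. -/
theorem stmt16 {E₁ E₂ : Type*}
    [NormedAddCommGroup E₁] [NormedSpace ℂ E₁] [CompleteSpace E₁]
    [NormedAddCommGroup E₂] [NormedSpace ℂ E₂] [CompleteSpace E₂]
    (f : E₁ → E₂) (hf : AnalyticOnNhd ℂ f (ball 0 1))
    (hmap : Set.MapsTo f (ball 0 1) (ball 0 1)) (hf0 : f 0 = 0)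
    (hiso : ∀ X : E₁, ‖fderiv ℂ f 0 X‖ = ‖X‖)
    (π : E₂ →L[ℂ] E₂) (hidem : π.comp π = π) (hnorm : ‖π‖ = 1)
    (hrange : Set.range π = Set.range (fderiv ℂ f 0))
    (g : E₂ → E₁) (hg : ∀ x : E₁, g (fderiv ℂ f 0 x) = x)
    (hπf : ∀ z ∈ ball (0 : E₁) 1, π (f z) = fderiv ℂ f 0 z)
    (r : E₂ → E₂) (hr : ∀ z : E₂, r z = π z + (f (g (π z)) - π (f (g (π z))))) :
    AnalyticOnNhd ℂ r (ball 0 1) ∧ Set.MapsTo r (ball 0 1) (f '' ball 0 1) ∧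
      ∀ w ∈ f '' ball (0 : E₁) 1, r w = w := by
  set D := fderiv ℂ f 0 with hD
  have hDinj : Function.Injective D := by
    intro x y h
    have h2 := hiso (x - y)
    rw [map_sub, h, sub_self, norm_zero] at h2
    exact sub_eq_zero.mp (norm_eq_zero.mp h2.symm)
  have hDg : ∀ z : E₂, D (g (π z)) = π z := by
    intro z
    have : π z ∈ Set.range D := by rw [← hrange]; exact ⟨z, rfl⟩
    obtain ⟨x, hx⟩ := this
    rw [← hx, hg]
  have hgnorm : ∀ z : E₂, ‖g (π z)‖ ≤ ‖z‖ := by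
    intro z
    rw [← hiso (g (π z)), hDg]
    calc ‖π z‖ ≤ ‖π‖ * ‖z‖ := π.le_opNorm z
      _ = ‖z‖ := by rw [hnorm, one_mul]
  have hmem : ∀ z ∈ ball (0 : E₂) 1, g (π z) ∈ ball (0 : E₁) 1 := by
    intro z hz
    rw [mem_ball_zero_iff] at hz ⊢
    exact lt_of_le_of_lt (hgnorm z) hz
  -- L is the continuous linear map z ↦ g (π z)
  let L : E₂ →L[ℂ] E₁ := LinearMap.mkContinuous
    { toFun := fun z => g (π z)
      map_add' := fun a b => hDinj (by show D (g (π (a + b))) = D (g (π a) + g (π b)); rw [map_add D, hDg, hDg, hDg, map_add])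
      map_smul' := fun c a => hDinj (by show D (g (π (c • a))) = D (c • g (π a)); rw [map_smul D, hDg, hDg, map_smul]) }
    1 (fun z => by simpa using hgnorm z)
  have hreq : ∀ z ∈ ball (0 : E₂) 1, r z = f (g (π z)) := by
    intro z hz
    rw [hr, hπf _ (hmem z hz), hDg]
    abel
  have hA : AnalyticOnNhd ℂ (f ∘ ⇑L) (ball 0 1) := fun z hz =>
    (hf (L z) (hmem z hz)).comp (L.analyticAt z)
  refine ⟨?_, ?_, ?_⟩
  · intro z hz
    exact (hA z hz).congr (Filter.eventuallyEq_iff_exists_mem.mpr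
      ⟨ball 0 1, isOpen_ball.mem_nhds hz, fun w hw => (hreq w hw)⟩).symm
  · intro z hz
    rw [hreq z hz]
    exact ⟨g (π z), hmem z hz, rfl⟩
  · rintro w ⟨x, hx, rfl⟩
    rw [hreq _ (hmap hx), hπf x hx, hg]
end
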